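/- arXiv:1707.00337 — 10 statements merged into one kernel-verified Lean document; each statement's English description precedes it below -/
import Mathlib

section
/- Let H be a symmetric N×N real matrix, λ ≥ 0 a real, J an M×N real matrix, and c ∈ ℝ^M such that g := J^T c ≠ 0. Suppose H + λI is positive semidefinite and n ∈ ℝ^N satisfies (H + λI) n = −g. Then n ≠ 0, and moreover n + t ≠ 0 for every t ∈ ℝ^N with J t = 0. -/
open Matrix

/-- If `g = Jᵀc ≠ 0`, `H + λI ⪰ 0`, and `(H + λI)n = -g`, then `n ≠ 0` and
`n + t ≠ 0` for every `t` in the null space of `J`. -/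
theorem normal_step_nonzero (N M : ℕ) (hN : 0 < N) (hM : 0 < M)
    (H : Matrix (Fin N) (Fin N) ℝ) (hH : H.IsSymm)
    (lam : ℝ) (hlam : 0 ≤ lam)
    (J : Matrix (Fin M) (Fin N) ℝ) (c : Fin M → ℝ)
    (hg : Jᵀ.mulVec c ≠ 0)
    (hpsd : (H + lam • (1 : Matrix (Fin N) (Fin N) ℝ)).PosSemidef)
    (n : Fin N → ℝ)
    (hn : (H + lam • (1 : Matrix (Fin N) (Fin N) ℝ)).mulVec n = -(Jᵀ.mulVec c)) :
    n ≠ 0 ∧ ∀ t : Fin N → ℝ, J.mulVec t = 0 → n + t ≠ 0 := by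
  have key : ∀ t : Fin N → ℝ, J.mulVec t = 0 → n + t ≠ 0 := by
    intro t ht hst
    have htn : t = -n := by
      have := congrArg (fun v => v - n) hst
      simpa [add_sub_cancel_left, zero_sub] using this
    have hJn : J.mulVec n = 0 := by
      have := ht
      rw [htn] at this
      simpa [Matrix.mulVec_neg, neg_eq_zero] using this
    set A := H + lam • (1 : Matrix (Fin N) (Fin N) ℝ)
    have hz : n ⬝ᵥ Jᵀ.mulVec c = 0 := by
      rw [Matrix.dotProduct_mulVec, Matrix.vecMul_transpose, hJn]; simp
    have hq : star n ⬝ᵥ A.mulVec n = 0 := by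
      have : n ⬝ᵥ A.mulVec n = -(n ⬝ᵥ Jᵀ.mulVec c) := by
        rw [hn]; simp
      rw [hz] at this
      simpa using this
    have hAn : A.mulVec n = 0 := (hpsd.dotProduct_mulVec_zero_iff n).mp hq
    rw [hn] at hAn
    exact hg (neg_eq_zero.mp hAn)
  refine ⟨?_, key⟩
  intro hn0
  exact key 0 (Matrix.mulVec_zero J) (by simp [hn0])
end

section
/- Let κρ, κv1, κv2 ∈ (0,1), let s ∈ ℝ^N with s ≠ 0, and let vmax > 0 and v⁺ ≥ 0 be reals satisfying v⁺ ≤ vmax − κρ‖s‖³. Define w = min{ max{κv1·vmax, vmax − κρ‖s‖³}, v⁺ + κv2·(vmax − v⁺) }. Then: (i) w ≥ v⁺; (ii) w > 0; (iii) w < vmax; and (iv) vmax − w ≥ κρ(1 − κv2)‖s‖³. -/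
/-- properties of the F-iteration trust-funnel radius update. -/
theorem funnel_update_F_iteration (N : ℕ) (κρ κv1 κv2 : ℝ)
    (hκρ : κρ ∈ Set.Ioo (0 : ℝ) 1) (hκv1 : κv1 ∈ Set.Ioo (0 : ℝ) 1)
    (hκv2 : κv2 ∈ Set.Ioo (0 : ℝ) 1)
    (s : EuclideanSpace ℝ (Fin N)) (hs : s ≠ 0)
    (vmax vplus : ℝ) (hvmax : 0 < vmax) (hvplus : 0 ≤ vplus)
    (hacc : vplus ≤ vmax - κρ * ‖s‖ ^ 3) :
    let w := min (max (κv1 * vmax) (vmax - κρ * ‖s‖ ^ 3)) (vplus + κv2 * (vmax - vplus))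
    w ≥ vplus ∧ 0 < w ∧ w < vmax ∧ vmax - w ≥ κρ * (1 - κv2) * ‖s‖ ^ 3 := by
  intro w
  obtain ⟨hκρ0, hκρ1⟩ := hκρ
  obtain ⟨hκv10, hκv11⟩ := hκv1
  obtain ⟨hκv20, hκv21⟩ := hκv2
  have hns : 0 < ‖s‖ := norm_pos_iff.mpr hs
  have ha : 0 < κρ * ‖s‖ ^ 3 := mul_pos hκρ0 (pow_pos hns 3)
  have hvv : vplus < vmax := by nlinarith
  have h2 : vplus + κv2 * (vmax - vplus) < vmax := by nlinarith
  have hw2 : w ≤ vplus + κv2 * (vmax - vplus) := min_le_right _ _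
  refine ⟨?_, ?_, ?_, ?_⟩
  · exact le_min (le_max_of_le_right (by linarith)) (by nlinarith)
  · exact lt_min (lt_max_of_lt_left (mul_pos hκv10 hvmax)) (by nlinarith)
  · linarith
  · nlinarith
end

section
/- Let κρ, κv1, κv2 ∈ (0,1), let s ∈ ℝ^N with s ≠ 0, and let reals vmax, v, v⁺ satisfy 0 ≤ v⁺ < v ≤ vmax and v − v⁺ ≥ κρ‖s‖³. Define w = min{ max{κv1·vmax, v⁺ + κv2·(v − v⁺)}, v⁺ + κv2·(vmax − v⁺) }. Then: (i) w > v⁺; (ii) w > 0; (iii) w < vmax; and (iv) vmax − w ≥ κρ(1 − κv2)‖s‖³. -/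
/-- properties of the successful V-iteration trust-funnel radius update. -/
theorem funnel_update_V_iteration (N : ℕ) (κρ κv1 κv2 : ℝ)
    (hκρ : κρ ∈ Set.Ioo (0 : ℝ) 1) (hκv1 : κv1 ∈ Set.Ioo (0 : ℝ) 1)
    (hκv2 : κv2 ∈ Set.Ioo (0 : ℝ) 1)
    (s : EuclideanSpace ℝ (Fin N)) (hs : s ≠ 0)
    (vmax v vplus : ℝ) (hvplus : 0 ≤ vplus) (hvv : vplus < v) (hvmax : v ≤ vmax)
    (hdec : v - vplus ≥ κρ * ‖s‖ ^ 3) :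
    let w := min (max (κv1 * vmax) (vplus + κv2 * (v - vplus)))
                 (vplus + κv2 * (vmax - vplus))
    w > vplus ∧ 0 < w ∧ w < vmax ∧ vmax - w ≥ κρ * (1 - κv2) * ‖s‖ ^ 3 := by
  intro w
  obtain ⟨hρ0, hρ1⟩ := hκρ
  obtain ⟨h10, h11⟩ := hκv1
  obtain ⟨h20, h21⟩ := hκv2
  have hvmax0 : 0 < vmax := lt_of_le_of_lt hvplus (lt_of_lt_of_le hvv hvmax)
  have h1 : w > vplus := by
    apply lt_min
    · exact lt_of_lt_of_le (by nlinarith) (le_max_right _ _)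
    · nlinarith
  have h2 : 0 < w := lt_of_le_of_lt hvplus h1
  have h3 : w < vmax := by
    apply lt_of_le_of_lt (min_le_left _ _)
    apply max_lt
    · nlinarith
    · nlinarith
  have h4 : vmax - w ≥ κρ * (1 - κv2) * ‖s‖ ^ 3 := by
    have := min_le_right (max (κv1 * vmax) (vplus + κv2 * (v - vplus)))
      (vplus + κv2 * (vmax - vplus))
    nlinarith [norm_pos_iff.mpr hs, pow_pos (norm_pos_iff.mpr hs) 3]
  exact ⟨h1, h2, h3, h4⟩
end

section
/- Let v : ℝ^N → ℝ be continuously differentiable with gradient ∇v Lipschitz continuous with constant L > 0 on the segment [x, x+s]. Let H be a symmetric N×N real matrix with operator norm ‖H‖ ≤ θ, and define the quadratic model m(d) = v(x) + ⟨∇v(x), d⟩ + ½⟨H d, d⟩. Let κvm ∈ (0,1), κδ > 1, κρ ∈ (0,1), λ ≥ 0, and n, s ∈ ℝ^N with s ≠ 0. If v(x) − m(s) ≥ ½ κvm λ ‖n‖², ‖s‖ ≤ κδ ‖n‖, and λ ≥ (κδ²/κvm)(2L + θ + 2κρ‖s‖), then v(x) − v(x+s) ≥ κρ ‖s‖³.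 -/
set_option maxHeartbeats 1000000

open scoped RealInnerProductSpace

/-- core of Lemma 3.10: if the trust-region multiplier `λ` of the normal
subproblem is sufficiently large relative to the trial step `s`, then the actual decrease in
the constraint-violation measure `v` is at least `κρ‖s‖³`. -/
theorem large_multiplier_sufficient_decrease (N : ℕ)
    (v : EuclideanSpace ℝ (Fin N) → ℝ) (hv : ContDiff ℝ 1 v)
    (x s : EuclideanSpace ℝ (Fin N)) (hs : s ≠ 0)
    (L : ℝ) (hL : 0 < L)
    (hlip : ∀ a ∈ segment ℝ x (x + s), ∀ b ∈ segment ℝ x (x + s),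
      ‖gradient v a - gradient v b‖ ≤ L * ‖a - b‖)
    (H : EuclideanSpace ℝ (Fin N) →L[ℝ] EuclideanSpace ℝ (Fin N))
    (hHsa : IsSelfAdjoint H) (θ : ℝ) (hHθ : ‖H‖ ≤ θ)
    (m : EuclideanSpace ℝ (Fin N) → ℝ)
    (hm : ∀ d, m d = v x + ⟪gradient v x, d⟫ + (1 / 2) * ⟪H d, d⟫)
    (κvm κδ κρ lam : ℝ)
    (hκvm : κvm ∈ Set.Ioo (0 : ℝ) 1) (hκδ : 1 < κδ) (hκρ : κρ ∈ Set.Ioo (0 : ℝ) 1)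
    (hlam : 0 ≤ lam)
    (n : EuclideanSpace ℝ (Fin N))
    (hdec : v x - m s ≥ (1 / 2) * κvm * lam * ‖n‖ ^ 2)
    (hsn : ‖s‖ ≤ κδ * ‖n‖)
    (hlamlb : lam ≥ (κδ ^ 2 / κvm) * (2 * L + θ + 2 * κρ * ‖s‖)) :
    v x - v (x + s) ≥ κρ * ‖s‖ ^ 3 := by
  have hκδ0 : (0:ℝ) < κδ := lt_trans one_pos hκδ
  set g : EuclideanSpace ℝ (Fin N) → EuclideanSpace ℝ (Fin N) := gradient v with hg
  -- auxiliary function w(y) = v(y) - ⟪g x, y⟫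
  set w : EuclideanSpace ℝ (Fin N) → ℝ := fun y => v y - ⟪g x, y⟫ with hw
  have hseg : Convex ℝ (segment ℝ x (x + s)) := convex_segment _ _
  have hderiv : ∀ y ∈ segment ℝ x (x + s),
      HasFDerivWithinAt w
        (InnerProductSpace.toDual ℝ (EuclideanSpace ℝ (Fin N)) (g y) - InnerProductSpace.toDual ℝ (EuclideanSpace ℝ (Fin N)) (g x))
        (segment ℝ x (x + s)) y := by
    intro y _
    have h1 : HasFDerivAt v (InnerProductSpace.toDual ℝ (EuclideanSpace ℝ (Fin N)) (g y)) y :=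
      ((hv.differentiable one_ne_zero) y).hasGradientAt.hasFDerivAt
    have h2 : HasFDerivAt (fun z : EuclideanSpace ℝ (Fin N) => ⟪g x, z⟫)
        (InnerProductSpace.toDual ℝ (EuclideanSpace ℝ (Fin N)) (g x)) y := by
      convert (InnerProductSpace.toDual ℝ (EuclideanSpace ℝ (Fin N)) (g x)).hasFDerivAt (x := y) using 1
      funext z; rw [InnerProductSpace.toDual_apply_apply]
    exact (h1.sub h2).hasFDerivWithinAt
  have hbound : ∀ y ∈ segment ℝ x (x + s),
      ‖InnerProductSpace.toDual ℝ (EuclideanSpace ℝ (Fin N)) (g y) - InnerProductSpace.toDual ℝ (EuclideanSpace ℝ (Fin N)) (g x)‖ ≤ L * ‖s‖ := by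
    intro y hy
    have hx : x ∈ segment ℝ x (x + s) := left_mem_segment ℝ _ _
    have := hlip y hy x hx
    rw [← (InnerProductSpace.toDual ℝ (EuclideanSpace ℝ (Fin N))).map_sub,
      (InnerProductSpace.toDual ℝ (EuclideanSpace ℝ (Fin N))).norm_map]
    refine this.trans ?_
    have hys : ‖y - x‖ ≤ ‖s‖ := by
      obtain ⟨a, b, ha, hb, hab, rfl⟩ := hy
      have : a • x + b • (x + s) - x = b • s := by
        have hx1 : a • x + b • (x + s) = x + b • s := by
          rw [smul_add, ← add_assoc, ← add_smul, hab, one_smul]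
        rw [hx1]; abel
      rw [this, norm_smul]
      calc ‖b‖ * ‖s‖ ≤ 1 * ‖s‖ := by
            apply mul_le_mul_of_nonneg_right _ (norm_nonneg s)
            rw [Real.norm_eq_abs, abs_of_nonneg hb]
            linarith
        _ = ‖s‖ := one_mul _
    nlinarith [norm_nonneg (y - x)]
  have hmv : ‖w (x + s) - w x‖ ≤ L * ‖s‖ * ‖x + s - x‖ :=
    hseg.norm_image_sub_le_of_norm_hasFDerivWithin_le hderiv hbound
      (left_mem_segment ℝ _ _) (right_mem_segment ℝ _ _)
  have hxs : ‖x + s - x‖ = ‖s‖ := by rw [add_sub_cancel_left]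
  rw [hxs] at hmv
  have hw1 : w (x + s) - w x = v (x + s) - v x - ⟪g x, s⟫ := by
    simp only [hw, inner_add_right]; ring
  have htaylor : v (x + s) - v x - ⟪g x, s⟫ ≤ L * ‖s‖ * ‖s‖ := by
    rw [← hw1]; exact (le_abs_self _).trans hmv
  have hHs : |⟪H s, s⟫| ≤ θ * ‖s‖ ^ 2 := by
    have h1 : |⟪H s, s⟫| ≤ ‖H s‖ * ‖s‖ := abs_real_inner_le_norm _ _
    have h2 : ‖H s‖ ≤ ‖H‖ * ‖s‖ := H.le_opNorm s
    have hHn : (0:ℝ) ≤ ‖H‖ := norm_nonneg _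
    nlinarith [norm_nonneg s, norm_nonneg (H s)]
  have hms := hm s
  -- key inequalities for the algebraic finish
  have hsp : (0:ℝ) < ‖s‖ := norm_pos_iff.mpr hs
  obtain ⟨hκvm0, hκvm1⟩ := hκvm
  obtain ⟨hκρ0, hκρ1⟩ := hκρ
  have hθ0 : (0:ℝ) ≤ θ := le_trans (norm_nonneg H) hHθ
  have hn0 : (0:ℝ) ≤ ‖n‖ := norm_nonneg n
  have hsn2 : ‖s‖ ^ 2 ≤ κδ ^ 2 * ‖n‖ ^ 2 := by nlinarith [hsn, hn0, hκδ0]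
  -- from hlamlb : κvm * lam ≥ κδ^2 * (2L + θ + 2κρ‖s‖)
  have hkey : κvm * lam ≥ κδ ^ 2 * (2 * L + θ + 2 * κρ * ‖s‖) := by
    rw [div_mul_eq_mul_div, ge_iff_le, div_le_iff₀ hκvm0] at hlamlb
    nlinarith [hlamlb]
  have hpos : (0:ℝ) ≤ 2 * L + θ + 2 * κρ * ‖s‖ := by nlinarith
  -- ½ κvm lam ‖n‖² ≥ ½ ‖s‖² (2L + θ + 2κρ‖s‖)
  have hmain : (1 / 2) * κvm * lam * ‖n‖ ^ 2 ≥
      (1 / 2) * ‖s‖ ^ 2 * (2 * L + θ + 2 * κρ * ‖s‖) := by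
    nlinarith [sq_nonneg ‖n‖]
  have habs : -(θ * ‖s‖ ^ 2) ≤ ⟪H s, s⟫ := neg_le_of_abs_le hHs
  -- v x - v (x+s) = (v x - m s) - (v(x+s) - m s)
  have hfin : v x - v (x + s) ≥
      (1 / 2) * κvm * lam * ‖n‖ ^ 2 - L * ‖s‖ ^ 2 - (1 / 2) * θ * ‖s‖ ^ 2 := by
    have : v (x + s) ≤ m s + L * ‖s‖ ^ 2 + (1 / 2) * θ * ‖s‖ ^ 2 := by
      rw [hms]; nlinarith
    linarith
  nlinarith
end

section
/- Let g ∈ ℝ^N with g ≠ 0, let H be a symmetric N×N real matrix with operator norm ‖H‖ > 0, let λ ≥ 0, δ > 0, and let n ∈ ℝ^N satisfy (H + λI)n = −g, ‖n‖ ≤ δ, and λ(δ − ‖n‖) = 0. Then ‖n‖ ≥ min{δ, ‖g‖/‖H‖} > 0. Consequently, for any κntn ∈ (0,1) and any s ∈ ℝ^N with ‖s‖ ≥ κntn‖n‖, it holds that ‖s‖ ≥ κntn min{δ, ‖g‖/‖H‖} > 0. -/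
open Matrix

/-- Euclidean (ℓ²) norm of a vector in `Fin n → ℝ`. -/
noncomputable def evnorm {n : ℕ} (x : Fin n → ℝ) : ℝ :=
  ‖(WithLp.equiv 2 (Fin n → ℝ)).symm x‖

/-- Lemma 3.13: lower bounds on the norms of the normal step and the full
step.  `(n, λ)` satisfy stationarity, feasibility, and complementary slackness for the
trust-region subproblem; `‖H‖` is the operator norm of `H`. -/
theorem normal_step_norm_lower_bound (N : ℕ) (g : Fin N → ℝ) (hg : g ≠ 0)
    (H : Matrix (Fin N) (Fin N) ℝ) (hH : H.IsSymm)
    (hHnorm : 0 < ‖Matrix.toEuclideanCLM (𝕜 := ℝ) H‖)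
    (lam δ : ℝ) (hlam : 0 ≤ lam) (hδ : 0 < δ)
    (n : Fin N → ℝ)
    (hstat : (H + lam • (1 : Matrix (Fin N) (Fin N) ℝ)).mulVec n = -g)
    (hfeas : evnorm n ≤ δ)
    (hcomp : lam * (δ - evnorm n) = 0) :
    (evnorm n ≥ min δ (evnorm g / ‖Matrix.toEuclideanCLM (𝕜 := ℝ) H‖)
      ∧ 0 < min δ (evnorm g / ‖Matrix.toEuclideanCLM (𝕜 := ℝ) H‖))
    ∧ ∀ κntn : ℝ, κntn ∈ Set.Ioo (0 : ℝ) 1 → ∀ s : Fin N → ℝ,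
        evnorm s ≥ κntn * evnorm n →
        evnorm s ≥ κntn * min δ (evnorm g / ‖Matrix.toEuclideanCLM (𝕜 := ℝ) H‖)
          ∧ 0 < κntn * min δ (evnorm g / ‖Matrix.toEuclideanCLM (𝕜 := ℝ) H‖) := by
  set K := ‖Matrix.toEuclideanCLM (𝕜 := ℝ) H‖ with hK
  have hgpos : 0 < evnorm g := by
    rw [evnorm, norm_pos_iff]
    simpa using hg
  have hminpos : 0 < min δ (evnorm g / K) :=
    lt_min hδ (div_pos hgpos hHnorm)
  have hmain : evnorm n ≥ min δ (evnorm g / K) := by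
    rcases eq_or_lt_of_le hlam with hl0 | hlpos
    · -- lam = 0, so H.mulVec n = -g
      have hHn : H.mulVec n = -g := by
        rw [← hstat, ← hl0]
        simp [Matrix.add_mulVec]
      have hle : evnorm g ≤ K * evnorm n := by
        have := (Matrix.toEuclideanCLM (𝕜 := ℝ) H).le_opNorm
          ((WithLp.equiv 2 (Fin N → ℝ)).symm n)
        rw [show (Matrix.toEuclideanCLM (𝕜 := ℝ) H) ((WithLp.equiv 2 (Fin N → ℝ)).symm n)
            = (WithLp.equiv 2 (Fin N → ℝ)).symm (H.mulVec n) from rfl, hHn] at this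
        rw [show (WithLp.equiv 2 (Fin N → ℝ)).symm (-g)
            = -((WithLp.equiv 2 (Fin N → ℝ)).symm g) from rfl, norm_neg] at this
        exact this
      have : evnorm g / K ≤ evnorm n := by
        rw [div_le_iff₀ hHnorm, mul_comm]
        exact hle
      exact le_trans (min_le_right _ _) this
    · -- lam > 0, so evnorm n = δ
      have : δ - evnorm n = 0 := by
        rcases mul_eq_zero.mp hcomp with h | h
        · exact absurd h (ne_of_gt hlpos)
        · exact h
      have hnδ : evnorm n = δ := by linarith
      rw [hnδ]
      exact min_le_left _ _
  refine ⟨⟨hmain, hminpos⟩, ?_⟩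
  intro κ hκ s hs
  refine ⟨le_trans (by nlinarith [hκ.1, hmain] : κ * min δ (evnorm g / K) ≤ κ * evnorm n) hs,
    mul_pos hκ.1 hminpos⟩
end

section
/- Let v : ℝ^N → ℝ be twice continuously differentiable whose Hessian is Lipschitz continuous with constant L_H > 0 on the segment [x, x+s]. Define the quadratic model m(d) = v(x) + ⟨∇v(x), d⟩ + ½⟨∇²v(x) d, d⟩. Let κvm ∈ (0,1), κδ > 1, κρ ∈ (0,1), λ ≥ 0, and n, s ∈ ℝ^N with s ≠ 0. If v(x) − m(s) ≥ ½ κvm λ ‖n‖², ‖s‖ ≤ κδ ‖n‖, and λ ≥ (κδ²/κvm)(L_H + 2κρ)‖s‖, then v(x) − v(x+s) ≥ κρ ‖s‖³. -/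
open scoped RealInnerProductSpace

set_option maxHeartbeats 1000000 in
/-- core of Lemma 3.16: under a Lipschitz Hessian, if the trust-region
multiplier `λ` of the normal subproblem satisfies `λ ≥ κδ²κvm⁻¹(L_H + 2κρ)‖s‖`, then the
actual decrease in `v` is at least `κρ‖s‖³`.  Here `gradient v` is `∇v` and
`fderiv ℝ (gradient v) x` is the Hessian operator `∇²v(x)`. -/
theorem large_multiplier_sufficient_decrease_hessian (N : ℕ)
    (v : EuclideanSpace ℝ (Fin N) → ℝ) (hv : ContDiff ℝ 2 v)
    (x s : EuclideanSpace ℝ (Fin N)) (hs : s ≠ 0)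
    (LH : ℝ) (hLH : 0 < LH)
    (hlip : ∀ a ∈ segment ℝ x (x + s), ∀ b ∈ segment ℝ x (x + s),
      ‖fderiv ℝ (gradient v) a - fderiv ℝ (gradient v) b‖ ≤ LH * ‖a - b‖)
    (m : EuclideanSpace ℝ (Fin N) → ℝ)
    (hm : ∀ d, m d = v x + ⟪gradient v x, d⟫ + (1 / 2) * ⟪fderiv ℝ (gradient v) x d, d⟫)
    (κvm κδ κρ lam : ℝ)
    (hκvm : κvm ∈ Set.Ioo (0 : ℝ) 1) (hκδ : 1 < κδ) (hκρ : κρ ∈ Set.Ioo (0 : ℝ) 1)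
    (hlam : 0 ≤ lam)
    (n : EuclideanSpace ℝ (Fin N))
    (hdec : v x - m s ≥ (1 / 2) * κvm * lam * ‖n‖ ^ 2)
    (hsn : ‖s‖ ≤ κδ * ‖n‖)
    (hlamlb : lam ≥ (κδ ^ 2 / κvm) * (LH + 2 * κρ) * ‖s‖) :
    v x - v (x + s) ≥ κρ * ‖s‖ ^ 3 := by
  classical
  set G : EuclideanSpace ℝ (Fin N) → EuclideanSpace ℝ (Fin N) := gradient v with hG
  set H : EuclideanSpace ℝ (Fin N) →L[ℝ] EuclideanSpace ℝ (Fin N) := fderiv ℝ G x with hH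
  have hvdiff : Differentiable ℝ v := hv.differentiable (by norm_num)
  have hGcd : ContDiff ℝ 1 G := by
    have h1 : ContDiff ℝ 1 (fderiv ℝ v) := hv.fderiv_right (by norm_num)
    have h2 : ContDiff ℝ 1 (fun l : EuclideanSpace ℝ (Fin N) →L[ℝ] ℝ =>
        (InnerProductSpace.toDual ℝ (EuclideanSpace ℝ (Fin N))).symm l) :=
      (InnerProductSpace.toDual ℝ (EuclideanSpace ℝ (Fin N))).symm.contDiff
    exact h2.comp h1
  have hGdiff : Differentiable ℝ G := hGcd.differentiable (by norm_num)
  have hinner : ∀ y d : EuclideanSpace ℝ (Fin N), ⟪G y, d⟫ = fderiv ℝ v y d := by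
    intro y d
    simp [hG, gradient, InnerProductSpace.toDual_symm_apply]
  set γ : ℝ → EuclideanSpace ℝ (Fin N) := fun t => x + t • s with hγ
  have hγmem : ∀ t ∈ Set.Icc (0:ℝ) 1, γ t ∈ segment ℝ x (x + s) := by
    intro t ht
    rw [segment_eq_image']
    exact ⟨t, ht, by simp [hγ]⟩
  have hγderiv : ∀ t : ℝ, HasDerivAt γ s t := by
    intro t
    have := ((hasDerivAt_id t).smul_const s).const_add x
    simp only [one_smul] at this
    exact this
  set φ : ℝ → ℝ := fun t => v (γ t) - t * ⟪G x, s⟫ - t ^ 2 / 2 * ⟪H s, s⟫ with hφ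
  have hφderiv : ∀ t : ℝ, HasDerivAt φ
      (⟪G (γ t), s⟫ - ⟪G x, s⟫ - t * ⟪H s, s⟫) t := by
    intro t
    have h1 : HasDerivAt (fun t => v (γ t)) (fderiv ℝ v (γ t) s) t :=
      (hvdiff (γ t)).hasFDerivAt.comp_hasDerivAt t (hγderiv t)
    have h2 : HasDerivAt (fun t : ℝ => t * ⟪G x, s⟫) ⟪G x, s⟫ t := by
      simpa using (hasDerivAt_id t).mul_const ⟪G x, s⟫
    have h3 : HasDerivAt (fun t : ℝ => t ^ 2 / 2 * ⟪H s, s⟫) (t * ⟪H s, s⟫) t := by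
      have := ((hasDerivAt_pow 2 t).div_const 2).mul_const ⟪H s, s⟫
      refine this.congr_deriv ?_
      simp only [Nat.cast_ofNat, Nat.reduceSub, pow_one]
      ring
    have := (h1.sub h2).sub h3
    rw [hinner (γ t) s]
    exact this
  have hsnorm : (0:ℝ) < ‖s‖ := norm_pos_iff.mpr hs
  have hφ'le : ∀ t ∈ Set.Icc (0:ℝ) 1,
      ⟪G (γ t), s⟫ - ⟪G x, s⟫ - t * ⟪H s, s⟫ ≤ LH * ‖s‖ ^ 2 * t * ‖s‖ := by
    intro t ht
    have hxmem : x ∈ segment ℝ x (x + s) := left_mem_segment ℝ x (x + s)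
    have hbound : ∀ a ∈ segment ℝ x (x + s), ‖fderiv ℝ G a - H‖ ≤ LH * ‖s‖ := by
      intro a ha
      refine (hlip a ha x hxmem).trans ?_
      have : ‖a - x‖ ≤ ‖s‖ := by
        rcases ha with ⟨u, w, hu, hw, huw, rfl⟩
        have heq : u • x + w • (x + s) - x = w • s := by
          rw [smul_add]
          rw [show u • x + (w • x + w • s) - x = (u + w) • x - x + w • s by
            rw [add_smul]; abel]
          rw [huw, one_smul]; abel
        rw [heq, norm_smul]
        exact mul_le_of_le_one_left (norm_nonneg s) (by
          rw [Real.norm_eq_abs, abs_of_nonneg hw]; linarith)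
      exact mul_le_mul_of_nonneg_left this hLH.le
    have hkey : ‖G (γ t) - G x - H (γ t - x)‖ ≤ (LH * ‖s‖) * ‖γ t - x‖ :=
      (convex_segment x (x + s)).norm_image_sub_le_of_norm_fderiv_le'
        (fun a _ => hGdiff a) hbound hxmem (hγmem t ht)
    have hγx : γ t - x = t • s := by simp [hγ]
    rw [hγx] at hkey
    have hHts : H (t • s) = t • H s := by simp
    have hnorm_ts : ‖t • s‖ = t * ‖s‖ := by
      rw [norm_smul, Real.norm_eq_abs, abs_of_nonneg ht.1]
    rw [hHts, hnorm_ts] at hkey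
    calc ⟪G (γ t), s⟫ - ⟪G x, s⟫ - t * ⟪H s, s⟫
        = ⟪G (γ t) - G x - t • H s, s⟫ := by
          rw [inner_sub_left, inner_sub_left, real_inner_smul_left]
      _ ≤ ‖G (γ t) - G x - t • H s‖ * ‖s‖ := real_inner_le_norm _ _
      _ ≤ (LH * ‖s‖ * (t * ‖s‖)) * ‖s‖ :=
          mul_le_mul_of_nonneg_right hkey (norm_nonneg s)
      _ = LH * ‖s‖ ^ 2 * t * ‖s‖ := by ring
  set ψ : ℝ → ℝ := fun t => LH * ‖s‖ ^ 3 * t ^ 2 / 2 - φ t with hψ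
  have hψderiv : ∀ t : ℝ, HasDerivAt ψ
      (LH * ‖s‖ ^ 3 * t - (⟪G (γ t), s⟫ - ⟪G x, s⟫ - t * ⟪H s, s⟫)) t := by
    intro t
    have h1 : HasDerivAt (fun t : ℝ => LH * ‖s‖ ^ 3 * t ^ 2 / 2)
        (LH * ‖s‖ ^ 3 * t) t := by
      have := ((hasDerivAt_pow 2 t).const_mul (LH * ‖s‖ ^ 3)).div_const 2
      refine this.congr_deriv ?_
      simp only [Nat.cast_ofNat, Nat.reduceSub, pow_one]
      ring
    exact h1.sub (hφderiv t)
  have hmono : ψ 0 ≤ ψ 1 := by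
    have hcont : ContinuousOn ψ (Set.Icc 0 1) :=
      fun t _ => ((hψderiv t).continuousAt).continuousWithinAt
    have hψ01 : MonotoneOn ψ (Set.Icc (0:ℝ) 1) := by
      apply monotoneOn_of_deriv_nonneg (convex_Icc 0 1) hcont
      · intro t ht
        rw [interior_Icc] at ht
        exact ((hψderiv t).differentiableAt).differentiableWithinAt
      · intro t ht
        rw [interior_Icc] at ht
        rw [(hψderiv t).deriv]
        have h1 := hφ'le t ⟨ht.1.le, ht.2.le⟩
        have h2 : LH * ‖s‖ ^ 2 * t * ‖s‖ = LH * ‖s‖ ^ 3 * t := by ring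
        linarith [h1.trans_eq h2]
    exact hψ01 (by norm_num) (by norm_num) (by norm_num)
  have hφ0 : φ 0 = v x := by simp [hφ, hγ]
  have hφ1 : φ 1 = v (x + s) - ⟪G x, s⟫ - 1 / 2 * ⟪H s, s⟫ := by
    simp [hφ, hγ]
  have hrem : v (x + s) - m s ≤ LH * ‖s‖ ^ 3 / 2 := by
    have hm' : m s = v x + ⟪G x, s⟫ + 1 / 2 * ⟪H s, s⟫ := hm s
    have h0 : -(v x) ≤ LH * ‖s‖ ^ 3 * 1 ^ 2 / 2 -
        (v (x + s) - ⟪G x, s⟫ - 1 / 2 * ⟪H s, s⟫) := by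
      have h := hmono
      rw [hψ] at h
      simp only at h
      rw [hφ0, hφ1] at h
      simpa using h
    rw [hm']
    nlinarith [h0]
  obtain ⟨hκvm0, hκvm1⟩ := hκvm
  obtain ⟨hκρ0, hκρ1⟩ := hκρ
  have hκδ0 : (0:ℝ) < κδ := by linarith
  have hn2 : ‖s‖ ^ 2 ≤ κδ ^ 2 * ‖n‖ ^ 2 := by
    calc ‖s‖ ^ 2 = ‖s‖ * ‖s‖ := by ring
      _ ≤ (κδ * ‖n‖) * (κδ * ‖n‖) := mul_self_le_mul_self (norm_nonneg s) hsn
      _ = κδ ^ 2 * ‖n‖ ^ 2 := by ring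
  have hlamlb' : κvm * lam ≥ κδ ^ 2 * (LH + 2 * κρ) * ‖s‖ := by
    have h1 := mul_le_mul_of_nonneg_left hlamlb (le_of_lt hκvm0)
    calc κvm * lam ≥ κvm * ((κδ ^ 2 / κvm) * (LH + 2 * κρ) * ‖s‖) := h1
      _ = κδ ^ 2 * (LH + 2 * κρ) * ‖s‖ := by field_simp
  have key : (1 / 2) * κvm * lam * ‖n‖ ^ 2 ≥
      (1 / 2) * (LH + 2 * κρ) * ‖s‖ ^ 3 := by
    have h1 : κvm * lam * ‖n‖ ^ 2 ≥ κδ ^ 2 * (LH + 2 * κρ) * ‖s‖ * ‖n‖ ^ 2 :=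
      mul_le_mul_of_nonneg_right hlamlb' (sq_nonneg _)
    have h2 : κδ ^ 2 * (LH + 2 * κρ) * ‖s‖ * ‖n‖ ^ 2 ≥ (LH + 2 * κρ) * ‖s‖ ^ 3 := by
      have hpos : 0 ≤ (LH + 2 * κρ) * ‖s‖ := by positivity
      have h3 := mul_le_mul_of_nonneg_left hn2 hpos
      calc (LH + 2 * κρ) * ‖s‖ ^ 3 = (LH + 2 * κρ) * ‖s‖ * ‖s‖ ^ 2 := by ring
        _ ≤ (LH + 2 * κρ) * ‖s‖ * (κδ ^ 2 * ‖n‖ ^ 2) := h3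
        _ = κδ ^ 2 * (LH + 2 * κρ) * ‖s‖ * ‖n‖ ^ 2 := by ring
    linarith
  have hsplit : v x - v (x + s) = (v x - m s) - (v (x + s) - m s) := by ring
  rw [hsplit]
  linarith [hrem, key, hdec]
end

section
/- Let v : ℝ^N → ℝ be twice continuously differentiable whose Hessian is Lipschitz continuous with constant L > 0 on the segment [x, x+s], and write H = ∇²v(x). Suppose λ ≥ 0 and n ∈ ℝ^N satisfy ∇v(x) + H n + λ n = 0; that s = n + t for some t ∈ ℝ^N; that ‖H t‖ ≤ κht ‖s‖² for some κht > 0; that ‖s‖ ≥ κntn ‖n‖ for some κntn ∈ (0,1); and that λ ≤ σ ‖n‖ for some σ > 0. Then ‖∇v(x+s)‖ ≤ (L + κht + σ/κntn²) ‖s‖². -/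
open scoped RealInnerProductSpace

/-- Lemma 3.17: bound on the gradient of the constraint-violation measure
after an accepted step `s = n + t`.  Here `H = ∇²v(x) = fderiv ℝ (gradient v) x`. -/
theorem gradient_bound_after_step (N : ℕ)
    (v : EuclideanSpace ℝ (Fin N) → ℝ) (hv : ContDiff ℝ 2 v)
    (x s : EuclideanSpace ℝ (Fin N)) (L : ℝ) (hL : 0 < L)
    (hlip : ∀ a ∈ segment ℝ x (x + s), ∀ b ∈ segment ℝ x (x + s),
      ‖fderiv ℝ (gradient v) a - fderiv ℝ (gradient v) b‖ ≤ L * ‖a - b‖)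
    (lam : ℝ) (hlam : 0 ≤ lam)
    (n t : EuclideanSpace ℝ (Fin N))
    (hstat : gradient v x + fderiv ℝ (gradient v) x n + lam • n = 0)
    (hs : s = n + t)
    (κht : ℝ) (hκht : 0 < κht)
    (hHt : ‖fderiv ℝ (gradient v) x t‖ ≤ κht * ‖s‖ ^ 2)
    (κntn : ℝ) (hκntn : κntn ∈ Set.Ioo (0 : ℝ) 1) (hsn : ‖s‖ ≥ κntn * ‖n‖)
    (σ : ℝ) (hσ : 0 < σ) (hlamub : lam ≤ σ * ‖n‖) :
    ‖gradient v (x + s)‖ ≤ (L + κht + σ / κntn ^ 2) * ‖s‖ ^ 2 := by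
  obtain ⟨hκ0, hκ1⟩ := hκntn
  set g := gradient v with hg
  set H := fderiv ℝ g x with hH
  -- g is C¹
  have hg1 : ContDiff ℝ 1 g := by
    have hfd : ContDiff ℝ 1 (fderiv ℝ v) := hv.fderiv_right (le_refl _)
    exact ((InnerProductSpace.toDual ℝ
      (EuclideanSpace ℝ (Fin N))).symm.toContinuousLinearEquiv.toContinuousLinearMap.contDiff).comp hfd
  have hgd : Differentiable ℝ g := hg1.differentiable one_ne_zero
  -- membership ⇒ ‖a - x‖ ≤ ‖s‖
  have hseg : ∀ a ∈ segment ℝ x (x + s), ‖a - x‖ ≤ ‖s‖ := by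
    rintro a ⟨p, q, hp, hq, hpq, rfl⟩
    have : p • x + q • (x + s) - x = q • s := by
      have hp1 : p = 1 - q := by linarith
      simp [hp1, smul_add, sub_smul, one_smul]
      abel
    rw [this, norm_smul]
    have : ‖s‖ = 1 * ‖s‖ := (one_mul _).symm
    rw [this]
    gcongr
    · rw [Real.norm_eq_abs, abs_of_nonneg hq]; linarith
    · simp
  -- MVT bound: ‖g(x+s) - g x - H s‖ ≤ L‖s‖ * ‖s‖
  have hmvt : ‖g (x + s) - g x - H s‖ ≤ L * ‖s‖ * ‖s‖ := by
    set φ : EuclideanSpace ℝ (Fin N) → EuclideanSpace ℝ (Fin N) := fun z => g z - H z with hφ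
    have hφd : ∀ a, DifferentiableAt ℝ φ a := fun a => (hgd a).sub (H.differentiableAt)
    have hφf : ∀ a, fderiv ℝ φ a = fderiv ℝ g a - H := by
      intro a
      rw [fderiv_fun_sub (hgd a) H.differentiableAt, H.fderiv]
    have key : ‖φ (x + s) - φ x‖ ≤ L * ‖s‖ * ‖(x + s) - x‖ :=
      (convex_segment x (x + s)).norm_image_sub_le_of_norm_fderiv_le
        (fun a _ => hφd a)
        (fun a ha => by
          rw [hφf a]
          calc ‖fderiv ℝ g a - H‖ ≤ L * ‖a - x‖ :=
                hlip a ha x (left_mem_segment ℝ x (x + s))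
            _ ≤ L * ‖s‖ := by gcongr; exact hseg a ha)
        (left_mem_segment ℝ x (x + s)) (right_mem_segment ℝ x (x + s))
    have h1 : φ (x + s) - φ x = g (x + s) - g x - H s := by
      simp only [hφ]
      rw [show (x + s) = x + s from rfl]
      have := H.map_add x s
      simp only [this]
      abel
    have h2 : (x + s) - x = s := by abel
    rw [h1, h2] at key
    exact key
  -- algebraic identity: g x + H s = -(lam • n) + H t
  have hid : g x + H s = -(lam • n) + H t := by
    rw [hs, H.map_add]
    have : g x + H n = -(lam • n) := by
      linear_combination (norm := module) hstat
    linear_combination (norm := module) this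
  -- norm bound on n
  have hn2 : ‖n‖ ^ 2 ≤ ‖s‖ ^ 2 / κntn ^ 2 := by
    rw [le_div_iff₀ (by positivity)]
    have h := mul_le_mul hsn hsn (by positivity) (norm_nonneg s)
    nlinarith [h]
  have hlamn : ‖lam • n‖ ≤ σ / κntn ^ 2 * ‖s‖ ^ 2 := by
    rw [norm_smul, Real.norm_eq_abs, abs_of_nonneg hlam]
    calc lam * ‖n‖ ≤ (σ * ‖n‖) * ‖n‖ := by
          gcongr
      _ = σ * ‖n‖ ^ 2 := by ring
      _ ≤ σ * (‖s‖ ^ 2 / κntn ^ 2) := by gcongr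
      _ = σ / κntn ^ 2 * ‖s‖ ^ 2 := by ring
  -- final assembly
  have hdecomp : g (x + s) = (g (x + s) - g x - H s) + (-(lam • n) + H t) := by
    rw [← hid]; abel
  calc ‖g (x + s)‖ = ‖(g (x + s) - g x - H s) + (-(lam • n) + H t)‖ := by rw [← hdecomp]
    _ ≤ ‖g (x + s) - g x - H s‖ + (‖lam • n‖ + ‖H t‖) := by
        refine (norm_add_le _ _).trans ?_
        gcongr
        exact (norm_add_le _ _).trans (by rw [norm_neg])
    _ ≤ L * ‖s‖ * ‖s‖ + (σ / κntn ^ 2 * ‖s‖ ^ 2 + κht * ‖s‖ ^ 2) := by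
        gcongr
    _ = (L + κht + σ / κntn ^ 2) * ‖s‖ ^ 2 := by ring
end

section
/- Let H be a symmetric N×N real matrix, J an M×N real matrix, g, n, t ∈ ℝ^N, y ∈ ℝ^M, λ ≥ 0, and f ∈ ℝ. Define the quadratic model m(d) = f + g^T d + ½ d^T H d. If (H + λI) t + J^T y = −(g + (H + λI) n) and J t = 0, then m(n) − m(n + t) = ½ t^T (H + λI) t + ½ λ ‖t‖² + λ n^T t. -/
open Matrix

/-- Lemma 3.19: exact decrease in the quadratic objective model produced by
the tangential step `t`, where `(t, y, λ)` satisfy the stationarity equations of the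
tangential trust-region subproblem. -/
theorem tangential_model_decrease (N M : ℕ)
    (H : Matrix (Fin N) (Fin N) ℝ) (hH : H.IsSymm)
    (J : Matrix (Fin M) (Fin N) ℝ)
    (g n t : Fin N → ℝ) (y : Fin M → ℝ)
    (lam : ℝ) (hlam : 0 ≤ lam) (f : ℝ)
    (m : (Fin N → ℝ) → ℝ)
    (hm : ∀ d, m d = f + g ⬝ᵥ d + (1 / 2) * d ⬝ᵥ H.mulVec d)
    (hstat : (H + lam • (1 : Matrix (Fin N) (Fin N) ℝ)).mulVec t + Jᵀ.mulVec y
      = -(g + (H + lam • (1 : Matrix (Fin N) (Fin N) ℝ)).mulVec n))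
    (hnull : J.mulVec t = 0) :
    m n - m (n + t)
      = (1 / 2) * t ⬝ᵥ (H + lam • (1 : Matrix (Fin N) (Fin N) ℝ)).mulVec t
        + (1 / 2) * lam * evnorm t ^ 2 + lam * (n ⬝ᵥ t) := by
  have hnorm : evnorm t ^ 2 = t ⬝ᵥ t := by
    have h := EuclideanSpace.norm_eq ((WithLp.equiv 2 (Fin N → ℝ)).symm t)
    simp only [evnorm, h]
    rw [Real.sq_sqrt (by positivity)]
    simp [dotProduct, sq]
  -- dot the stationarity equation with t
  have hdot := congrArg (fun v => t ⬝ᵥ v) hstat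
  simp only [dotProduct_add, dotProduct_neg] at hdot
  have hJt : t ⬝ᵥ Jᵀ.mulVec y = 0 := by
    rw [dotProduct_mulVec, vecMul_transpose, hnull, zero_dotProduct]
  rw [hJt, add_zero] at hdot
  -- symmetry of H
  have hsymm : t ⬝ᵥ H.mulVec n = n ⬝ᵥ H.mulVec t := by
    rw [dotProduct_mulVec, ← mulVec_transpose, hH.eq, dotProduct_comm]
  have hIt : (lam • (1 : Matrix (Fin N) (Fin N) ℝ)).mulVec t = lam • t := by
    rw [smul_mulVec, one_mulVec]
  have hIn : (lam • (1 : Matrix (Fin N) (Fin N) ℝ)).mulVec n = lam • n := by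
    rw [smul_mulVec, one_mulVec]
  simp only [add_mulVec, hIt, hIn, dotProduct_add, dotProduct_smul, smul_eq_mul] at hdot ⊢
  rw [hm, hm, hnorm]
  simp only [dotProduct_add, add_dotProduct, mulVec_add]
  have hc : t ⬝ᵥ n = n ⬝ᵥ t := dotProduct_comm t n
  have hg : t ⬝ᵥ g = g ⬝ᵥ t := dotProduct_comm t g
  have h2 : lam * (t ⬝ᵥ n) = lam * (n ⬝ᵥ t) := by rw [hc]
  linarith [hdot, hsymm, hg, h2]
end

section
/- Let f : ℝ^N → ℝ be twice continuously differentiable whose Hessian is Lipschitz continuous with constant L > 0 on the segment [x, x+s]. Let g = ∇f(x), let H be a symmetric N×N real matrix, and define the quadratic model m(d) = f(x) + ⟨g, d⟩ + ½⟨H d, d⟩. Let J be an M×N real matrix, n, t ∈ ℝ^N, s = n + t with s ≠ 0, y ∈ ℝ^M, λ ≥ 0, and constants κst, κntt, κfm, κρ ∈ (0,1) and κhs > 0. Suppose: (a) (H + λI)t + J^T y = −(g + (H + λI)n) and J t = 0; (b) t^T (H + λI) t ≥ 0; (c) ‖t‖ ≥ κst ‖s‖; (d) m(0) − m(s) ≥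 κfm (m(n) − m(s)); (e) n^T t ≥ −½ κntt ‖t‖²; (f) ‖(H − ∇²f(x)) s‖ ≤ κhs ‖s‖²; and (g) λ ≥ (κfm κst² (1 − κntt))^{-1}(κhs + L + 2κρ) ‖s‖. Then f(x) − f(x+s) ≥ κρ ‖s‖³. -/
open scoped RealInnerProductSpace

theorem taylor_upper_aux {E : Type*} [NormedAddCommGroup E] [InnerProductSpace ℝ E]
    [CompleteSpace E]
    (f : E → ℝ) (hf : ContDiff ℝ 2 f) (x s : E) (L : ℝ) (hL : 0 ≤ L)
    (hlip : ∀ a ∈ segment ℝ x (x + s),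
      ‖fderiv ℝ (gradient f) a - fderiv ℝ (gradient f) x‖ ≤ L * ‖a - x‖) :
    f (x + s) ≤ f x + ⟪gradient f x, s⟫
      + (1 / 2) * ⟪(fderiv ℝ (gradient f) x) s, s⟫ + L / 2 * ‖s‖ ^ 3 := by
  have hfd : Differentiable ℝ f := hf.differentiable two_ne_zero
  have hg1 : ContDiff ℝ 1 (gradient f) := by
    have h1 : ContDiff ℝ 1 (fderiv ℝ f) := hf.fderiv_right (by norm_num)
    exact (InnerProductSpace.toDual ℝ E).symm.contDiff.comp h1
  have hgd : Differentiable ℝ (gradient f) := hg1.differentiable one_ne_zero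
  set G : E → E →L[ℝ] E := fderiv ℝ (gradient f) with hG
  have hγ : ∀ u : ℝ, HasDerivAt (fun u : ℝ => x + u • s) s u := by
    intro u
    simpa using ((hasDerivAt_id u).smul_const s).const_add x
  have hkey : ∀ z : E, ⟪gradient f z, s⟫ = fderiv ℝ f z s := fun z =>
    InnerProductSpace.toDual_symm_apply
  have hφ' : ∀ u : ℝ, HasDerivAt (fun u : ℝ => f (x + u • s))
      (⟪gradient f (x + u • s), s⟫) u := by
    intro u
    rw [hkey]
    exact (hfd (x + u • s)).hasFDerivAt.comp_hasDerivAt u (hγ u)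
  have hφ'' : ∀ u : ℝ, HasDerivAt (fun u : ℝ => ⟪gradient f (x + u • s), s⟫)
      (⟪(G (x + u • s)) s, s⟫) u := by
    intro u
    have h1 : HasDerivAt (fun u : ℝ => gradient f (x + u • s)) ((G (x + u • s)) s) u :=
      by have := (hgd (x + u • s)).hasFDerivAt.comp_hasDerivAt u (hγ u); exact this
    simpa using h1.inner ℝ (hasDerivAt_const u s)
  set B : ℝ := ⟪(G x) s, s⟫ with hB
  have hbb : ∀ u ∈ Set.Icc (0:ℝ) 1, ⟪(G (x + u • s)) s, s⟫ ≤ B + L * ‖s‖ ^ 3 := by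
    intro u hu
    have hmem : x + u • s ∈ segment ℝ x (x + s) := by
      refine ⟨1 - u, u, by linarith [hu.2], hu.1, by ring, ?_⟩
      rw [smul_add]
      module
    have h1 : ‖G (x + u • s) - G x‖ ≤ L * ‖x + u • s - x‖ := hlip _ hmem
    have h2 : ‖x + u • s - x‖ = u * ‖s‖ := by
      simp [norm_smul, abs_of_nonneg hu.1]
    have h3 : ⟪(G (x + u • s)) s, s⟫ - B = ⟪(G (x + u • s) - G x) s, s⟫ := by
      simp [hB, ContinuousLinearMap.sub_apply, inner_sub_left]
    have h4 : ⟪(G (x + u • s) - G x) s, s⟫ ≤ ‖(G (x + u • s) - G x) s‖ * ‖s‖ :=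
      real_inner_le_norm _ _
    have h5 : ‖(G (x + u • s) - G x) s‖ ≤ ‖G (x + u • s) - G x‖ * ‖s‖ :=
      ContinuousLinearMap.le_opNorm _ _
    have hs0 : (0:ℝ) ≤ ‖s‖ := norm_nonneg s
    rw [h2] at h1
    have h6 : ‖(G (x + u • s) - G x) s‖ ≤ L * (u * ‖s‖) * ‖s‖ :=
      h5.trans (mul_le_mul_of_nonneg_right h1 hs0)
    have h7 : ‖(G (x + u • s) - G x) s‖ * ‖s‖ ≤ L * (u * ‖s‖) * ‖s‖ * ‖s‖ :=
      mul_le_mul_of_nonneg_right h6 hs0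
    have h8 : L * ‖s‖ ^ 3 * u ≤ L * ‖s‖ ^ 3 * 1 :=
      mul_le_mul_of_nonneg_left hu.2 (mul_nonneg hL (pow_nonneg hs0 3))
    nlinarith [h3, h4, h7, h8]
  -- comparison function
  set C : ℝ := B + L * ‖s‖ ^ 3 with hC
  set p0 : ℝ := ⟪gradient f x, s⟫ with hp0
  set Φ : ℝ → ℝ := fun u => f x + u * p0 + u ^ 2 / 2 * C - f (x + u • s) with hΦ
  set Φ' : ℝ → ℝ := fun u => p0 + u * C - ⟪gradient f (x + u • s), s⟫ with hΦ'
  have hdΦ : ∀ u : ℝ, HasDerivAt Φ (Φ' u) u := by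
    intro u
    have h1 : HasDerivAt (fun u : ℝ => f x + u * p0 + u ^ 2 / 2 * C)
        (p0 + u * C) u := by
      have := (((hasDerivAt_pow 2 u).div_const 2).mul_const C)
      have h2 := (((hasDerivAt_id u).mul_const p0).const_add (f x)).add this
      refine h2.congr_deriv ?_
      ring
    exact h1.sub (hφ' u)
  have hdΦ' : ∀ u : ℝ, HasDerivAt Φ' (C - ⟪(G (x + u • s)) s, s⟫) u := by
    intro u
    have h1 : HasDerivAt (fun u : ℝ => p0 + u * C) C u := by
      simpa using ((hasDerivAt_id u).mul_const C).const_add p0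
    exact h1.sub (hφ'' u)
  have hmono' : MonotoneOn Φ' (Set.Icc 0 1) := by
    apply monotoneOn_of_deriv_nonneg (convex_Icc 0 1)
    · exact fun u _ => ((hdΦ' u).continuousAt).continuousWithinAt
    · exact fun u _ => ((hdΦ' u).differentiableAt).differentiableWithinAt
    · intro u hu
      rw [(hdΦ' u).deriv]
      rw [interior_Icc] at hu
      have := hbb u ⟨le_of_lt hu.1, le_of_lt hu.2⟩
      linarith
  have hΦ'0 : Φ' 0 = 0 := by simp [hΦ', hp0]
  have hΦ'nonneg : ∀ u ∈ Set.Icc (0:ℝ) 1, 0 ≤ Φ' u := by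
    intro u hu
    have := hmono' (Set.left_mem_Icc.mpr zero_le_one) hu hu.1
    rw [hΦ'0] at this; exact this
  have hmono : MonotoneOn Φ (Set.Icc 0 1) := by
    apply monotoneOn_of_deriv_nonneg (convex_Icc 0 1)
    · exact fun u _ => ((hdΦ u).continuousAt).continuousWithinAt
    · exact fun u _ => ((hdΦ u).differentiableAt).differentiableWithinAt
    · intro u hu
      rw [(hdΦ u).deriv]
      rw [interior_Icc] at hu
      exact hΦ'nonneg u ⟨le_of_lt hu.1, le_of_lt hu.2⟩
  have h01 := hmono (Set.left_mem_Icc.mpr zero_le_one)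
    (Set.right_mem_Icc.mpr zero_le_one) zero_le_one
  have hΦ0 : Φ 0 = 0 := by simp [hΦ]
  have hΦ1 : Φ 1 = f x + p0 + C / 2 - f (x + s) := by simp [hΦ]; ring
  rw [hΦ0, hΦ1] at h01
  have : f (x + s) ≤ f x + p0 + C / 2 := by linarith
  rw [hC, hB, hp0] at this
  linarith

set_option maxHeartbeats 1000000 in
/-- Lemma 3.20: in an F-iteration, if the trust-region multiplier `λ` of the
tangential subproblem is sufficiently large relative to the trial step `s = n + t`, then the
actual objective decrease satisfies `f(x) - f(x+s) ≥ κρ‖s‖³`.  Here `H` is a self-adjoint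
operator (symmetric matrix) on `ℝ^N`, `J` is the constraint Jacobian (an `M×N` matrix, as a
linear operator), and `∇²f(x) = fderiv ℝ (gradient f) x`. -/
theorem f_iteration_sufficient_decrease (N M : ℕ)
    (f : EuclideanSpace ℝ (Fin N) → ℝ) (hf : ContDiff ℝ 2 f)
    (x s : EuclideanSpace ℝ (Fin N)) (L : ℝ) (hL : 0 < L)
    (hlip : ∀ a ∈ segment ℝ x (x + s), ∀ b ∈ segment ℝ x (x + s),
      ‖fderiv ℝ (gradient f) a - fderiv ℝ (gradient f) b‖ ≤ L * ‖a - b‖)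
    (H : EuclideanSpace ℝ (Fin N) →L[ℝ] EuclideanSpace ℝ (Fin N))
    (hHsa : IsSelfAdjoint H)
    (m : EuclideanSpace ℝ (Fin N) → ℝ)
    (hm : ∀ d, m d = f x + ⟪gradient f x, d⟫ + (1 / 2) * ⟪H d, d⟫)
    (J : EuclideanSpace ℝ (Fin N) →L[ℝ] EuclideanSpace ℝ (Fin M))
    (n t : EuclideanSpace ℝ (Fin N)) (hs : s = n + t) (hsne : s ≠ 0)
    (y : EuclideanSpace ℝ (Fin M)) (lam : ℝ) (hlam : 0 ≤ lam)
    (κst κntt κfm κρ : ℝ)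
    (hκst : κst ∈ Set.Ioo (0 : ℝ) 1) (hκntt : κntt ∈ Set.Ioo (0 : ℝ) 1)
    (hκfm : κfm ∈ Set.Ioo (0 : ℝ) 1) (hκρ : κρ ∈ Set.Ioo (0 : ℝ) 1)
    (κhs : ℝ) (hκhs : 0 < κhs)
    -- (a) stationarity of the tangential subproblem
    (hstat : (H + lam • (1 : EuclideanSpace ℝ (Fin N) →L[ℝ] EuclideanSpace ℝ (Fin N))) t
        + ContinuousLinearMap.adjoint J y
      = -(gradient f x
        + (H + lam • (1 : EuclideanSpace ℝ (Fin N) →L[ℝ] EuclideanSpace ℝ (Fin N))) n))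
    (hnull : J t = 0)
    -- (b) nonnegative curvature along t
    (hcurv : 0 ≤ ⟪(H + lam • (1 : EuclideanSpace ℝ (Fin N) →L[ℝ] EuclideanSpace ℝ (Fin N))) t, t⟫)
    -- (c)
    (hts : ‖t‖ ≥ κst * ‖s‖)
    -- (d)
    (hmred : m 0 - m s ≥ κfm * (m n - m s))
    -- (e)
    (hnt : ⟪n, t⟫ ≥ -(1 / 2) * κntt * ‖t‖ ^ 2)
    -- (f)
    (hHs : ‖(H - fderiv ℝ (gradient f) x) s‖ ≤ κhs * ‖s‖ ^ 2)
    -- (g)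
    (hlamlb : lam ≥ (κfm * κst ^ 2 * (1 - κntt))⁻¹ * (κhs + L + 2 * κρ) * ‖s‖) :
    f x - f (x + s) ≥ κρ * ‖s‖ ^ 3 := by
  set g : EuclideanSpace ℝ (Fin N) := gradient f x with hg
  set G : EuclideanSpace ℝ (Fin N) →L[ℝ] EuclideanSpace ℝ (Fin N) :=
    fderiv ℝ (gradient f) x with hGdef
  have hsym : ∀ a b : EuclideanSpace ℝ (Fin N), ⟪H a, b⟫ = ⟪a, H b⟫ :=
    fun a b => (ContinuousLinearMap.isSelfAdjoint_iff_isSymmetric.mp hHsa) a b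
  have hs0 : (0:ℝ) ≤ ‖s‖ := norm_nonneg s
  have ht0 : (0:ℝ) ≤ ‖t‖ := norm_nonneg t
  -- Taylor bound
  have htay : f (x + s) ≤ f x + ⟪g, s⟫ + (1/2) * ⟪G s, s⟫ + L/2 * ‖s‖ ^ 3 :=
    taylor_upper_aux f hf x s L hL.le
      (fun a ha => hlip a ha x (left_mem_segment ℝ x (x + s)))
  -- model decreases
  have hm0 : m 0 - m s = -(⟪g, s⟫ + (1/2) * ⟪H s, s⟫) := by
    rw [hm 0, hm s]
    simp only [inner_zero_right, map_zero]
    ring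
  have hHss : ⟪H s, s⟫ = ⟪H n, n⟫ + 2 * ⟪H n, t⟫ + ⟪H t, t⟫ := by
    have h1 : ⟪H t, n⟫ = ⟪H n, t⟫ := by
      rw [hsym t n]; exact real_inner_comm (H n) t
    calc ⟪H s, s⟫ = ⟪H (n + t), n + t⟫ := by rw [hs]
      _ = ⟪H n, n⟫ + ⟪H n, t⟫ + (⟪H t, n⟫ + ⟪H t, t⟫) := by
          rw [map_add, inner_add_left, inner_add_right, inner_add_right]
      _ = ⟪H n, n⟫ + 2 * ⟪H n, t⟫ + ⟪H t, t⟫ := by rw [h1]; ring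
  have hgs : ⟪g, s⟫ = ⟪g, n⟫ + ⟪g, t⟫ := by rw [hs, inner_add_right]
  have hmn : m n - m s = -(⟪g, t⟫ + ⟪H n, t⟫ + (1/2) * ⟪H t, t⟫) := by
    rw [hm n, hm s, hHss, hgs]
    ring
  -- stationarity inner product with t
  have hstat' := congrArg (fun z : EuclideanSpace ℝ (Fin N) => ⟪z, t⟫) hstat
  simp only [inner_add_left, inner_neg_left, ContinuousLinearMap.add_apply,
    ContinuousLinearMap.smul_apply, ContinuousLinearMap.one_apply, real_inner_smul_left,
    ContinuousLinearMap.adjoint_inner_left, hnull, inner_zero_right] at hstat'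
  have hstt : ⟪t, t⟫ = ‖t‖ ^ 2 := real_inner_self_eq_norm_sq t
  rw [hstt] at hstat'
  have hcurv' : (0:ℝ) ≤ ⟪H t, t⟫ + lam * ‖t‖ ^ 2 := by
    have h := hcurv
    simp only [ContinuousLinearMap.add_apply, ContinuousLinearMap.smul_apply,
      ContinuousLinearMap.one_apply, inner_add_left, real_inner_smul_left, hstt] at h
    exact h
  have hmn2 : m n - m s = (1/2) * ⟪H t, t⟫ + lam * ‖t‖ ^ 2 + lam * ⟪n, t⟫ := by
    rw [hmn]
    linarith [hstat']
  -- lower bound on model decrease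
  have hts2 : ‖t‖ ^ 2 ≥ κst ^ 2 * ‖s‖ ^ 2 := by
    nlinarith [hκst.1, mul_nonneg hκst.1.le hs0]
  have hmnlb : m n - m s ≥ lam / 2 * (1 - κntt) * ‖t‖ ^ 2 := by
    have h1 : lam * ⟪n, t⟫ ≥ lam * (-(1/2) * κntt * ‖t‖ ^ 2) :=
      mul_le_mul_of_nonneg_left hnt hlam
    rw [hmn2]
    linarith [hcurv', h1]
  set c : ℝ := κfm * κst ^ 2 * (1 - κntt) with hc
  have hcpos : 0 < c := by
    have h1 := hκfm.1; have h2 := hκst.1; have h3 := hκntt.2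
    have : (0:ℝ) < 1 - κntt := by linarith
    positivity
  have hK : 0 < κhs + L + 2 * κρ := by have := hκρ.1; linarith
  have hlam2 : (κhs + L + 2 * κρ) * ‖s‖ ≤ c * lam := by
    have h1 : c⁻¹ * ((κhs + L + 2 * κρ) * ‖s‖) ≤ lam := by
      rw [← mul_assoc]; exact hlamlb
    calc (κhs + L + 2 * κρ) * ‖s‖ = c * (c⁻¹ * ((κhs + L + 2 * κρ) * ‖s‖)) := by
          field_simp
      _ ≤ c * lam := mul_le_mul_of_nonneg_left h1 hcpos.le
  have hdec : m 0 - m s ≥ (1/2) * (κhs + L + 2 * κρ) * ‖s‖ ^ 3 := by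
    have h1 : m 0 - m s ≥ κfm * (lam / 2 * (1 - κntt) * ‖t‖ ^ 2) :=
      le_trans (mul_le_mul_of_nonneg_left hmnlb hκfm.1.le) hmred
    have hnn : 0 ≤ κfm * (lam / 2 * (1 - κntt)) := by
      have h3 := hκntt.2; have h4 := hκfm.1
      have h5 : (0:ℝ) ≤ 1 - κntt := by linarith
      positivity
    have h2 : κfm * (lam / 2 * (1 - κntt) * ‖t‖ ^ 2)
        ≥ κfm * (lam / 2 * (1 - κntt) * (κst ^ 2 * ‖s‖ ^ 2)) := by
      nlinarith [hts2]
    have h3 : κfm * (lam / 2 * (1 - κntt) * (κst ^ 2 * ‖s‖ ^ 2))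
        = (c * lam) * ‖s‖ ^ 2 / 2 := by rw [hc]; ring
    have h4 : (c * lam) * ‖s‖ ^ 2 / 2 ≥ ((κhs + L + 2 * κρ) * ‖s‖) * ‖s‖ ^ 2 / 2 := by
      linarith [mul_le_mul_of_nonneg_right hlam2 (mul_nonneg hs0 hs0)]
    linarith [h1, h2, h3.ge, h3.le, h4]
  -- curvature gap
  have hgap : ⟪H s, s⟫ - ⟪G s, s⟫ ≥ -(κhs * ‖s‖ ^ 3) := by
    have h1 : ⟪G s, s⟫ - ⟪H s, s⟫ = ⟪(G - H) s, s⟫ := by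
      rw [ContinuousLinearMap.sub_apply, inner_sub_left]
    have h2 : ⟪(G - H) s, s⟫ ≤ ‖(G - H) s‖ * ‖s‖ := real_inner_le_norm _ _
    have h3 : ‖(G - H) s‖ = ‖(H - G) s‖ := by
      rw [← norm_neg]
      congr 1
      rw [ContinuousLinearMap.sub_apply, ContinuousLinearMap.sub_apply]
      abel
    have h4 : ‖(H - G) s‖ * ‖s‖ ≤ κhs * ‖s‖ ^ 2 * ‖s‖ :=
      mul_le_mul_of_nonneg_right hHs hs0
    rw [h3] at h2
    linarith [h1, h2, h4]
  -- combine
  have hfinal : f x - f (x + s) ≥ (m 0 - m s) + (1/2) * (⟪H s, s⟫ - ⟪G s, s⟫)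
      - L/2 * ‖s‖ ^ 3 := by
    rw [hm0]
    linarith [htay]
  linarith [hfinal, hdec, hgap]
end

section
/- Let ε > 0, ε_feas > 0, ω > 0, and β ∈ (0,1) be real numbers, and let b ∈ ℝ with 0 ≤ b ≤ ε_feas. If ε_feas² − b² ≥ 2ω ε^{3/2} b^{3/2}, then ε_feas − b ≥ κ_t · min{ε^{3/2} ε_feas^{1/2}, ε_feas}, where κ_t := min{ω β^{3/2}, 1 − β}. -/
/-- core of Lemma A.5: residual decrease bound in phase 2.  Powers with real
exponents are real powers (`Real.rpow`). -/
theorem residual_decrease (ε εfeas ω β : ℝ)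
    (hε : 0 < ε) (hεf : 0 < εfeas) (hω : 0 < ω) (hβ : β ∈ Set.Ioo (0 : ℝ) 1)
    (b : ℝ) (hb0 : 0 ≤ b) (hb : b ≤ εfeas)
    (h : εfeas ^ 2 - b ^ 2 ≥ 2 * ω * ε ^ ((3 : ℝ) / 2) * b ^ ((3 : ℝ) / 2)) :
    εfeas - b ≥ min (ω * β ^ ((3 : ℝ) / 2)) (1 - β)
      * min (ε ^ ((3 : ℝ) / 2) * εfeas ^ ((1 : ℝ) / 2)) εfeas := by
  obtain ⟨hβ0, hβ1⟩ := hβ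
  have hβr : (0:ℝ) < β ^ ((3:ℝ)/2) := Real.rpow_pos_of_pos hβ0 _
  have hεr : (0:ℝ) < ε ^ ((3:ℝ)/2) := Real.rpow_pos_of_pos hε _
  have hεfr : (0:ℝ) < εfeas ^ ((1:ℝ)/2) := Real.rpow_pos_of_pos hεf _
  rcases le_or_gt b (β * εfeas) with hcase | hcase
  · -- small b: εfeas - b ≥ (1-β) εfeas
    have h1 : min (ω * β ^ ((3:ℝ)/2)) (1 - β) ≤ 1 - β := min_le_right _ _
    have h2 : min (ε ^ ((3:ℝ)/2) * εfeas ^ ((1:ℝ)/2)) εfeas ≤ εfeas := min_le_right _ _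
    have hmin0 : 0 ≤ min (ω * β ^ ((3:ℝ)/2)) (1 - β) := by
      apply le_min (by positivity) (by linarith)
    calc min (ω * β ^ ((3:ℝ)/2)) (1 - β) * min (ε ^ ((3:ℝ)/2) * εfeas ^ ((1:ℝ)/2)) εfeas
        ≤ (1 - β) * εfeas := by
          apply mul_le_mul h1 h2 (le_min (by positivity) hεf.le) (by linarith)
      _ ≤ εfeas - b := by nlinarith
  · -- large b
    have hsplit : εfeas ^ ((3:ℝ)/2) = εfeas * εfeas ^ ((1:ℝ)/2) := by
      rw [show (3:ℝ)/2 = 1 + 1/2 by norm_num, Real.rpow_add hεf, Real.rpow_one]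
    have hbr : (β * εfeas) ^ ((3:ℝ)/2) ≤ b ^ ((3:ℝ)/2) :=
      Real.rpow_le_rpow (by positivity) hcase.le (by norm_num)
    have hbre : (β * εfeas) ^ ((3:ℝ)/2) = β ^ ((3:ℝ)/2) * εfeas ^ ((3:ℝ)/2) :=
      Real.mul_rpow hβ0.le hεf.le
    have key : (εfeas - b) * (2 * εfeas) ≥
        (ω * β ^ ((3:ℝ)/2) * (ε ^ ((3:ℝ)/2) * εfeas ^ ((1:ℝ)/2))) * (2 * εfeas) := by
      have h3 : (εfeas - b) * (2 * εfeas) ≥ εfeas ^ 2 - b ^ 2 := by nlinarith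
      have h4 := mul_le_mul_of_nonneg_left hbr
        (by positivity : (0:ℝ) ≤ 2 * ω * ε ^ ((3:ℝ)/2))
      rw [hbre, hsplit] at h4
      nlinarith
    have key2 : εfeas - b ≥ ω * β ^ ((3:ℝ)/2) * (ε ^ ((3:ℝ)/2) * εfeas ^ ((1:ℝ)/2)) :=
      le_of_mul_le_mul_right key (by positivity)
    calc min (ω * β ^ ((3:ℝ)/2)) (1 - β) * min (ε ^ ((3:ℝ)/2) * εfeas ^ ((1:ℝ)/2)) εfeas
        ≤ (ω * β ^ ((3:ℝ)/2)) * (ε ^ ((3:ℝ)/2) * εfeas ^ ((1:ℝ)/2)) := by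
          apply mul_le_mul (min_le_left _ _) (min_le_left _ _)
            (le_min (by positivity) hεf.le) (by positivity)
      _ ≤ εfeas - b := key2
end
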